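/- Let G = ℤ/2ℤ × ℤ and define c : G × G → ℂˣ by c((a,b),(a',b')) = (−1)^{a'·b}, which is well defined since (−1)^{a'·b} depends only on a' modulo 2. Then c is a 2-cocycle for the trivial action of G on ℂˣ, i.e. c(y,z)·c(x, y+z) = c(x+y, z)·c(x,y) for all x, y, z ∈ G, and c is not a 2-coboundary: there is no function λ : G → ℂˣ such that c(x,y) = λ(x)·λ(y)·λ(x+y)⁻¹ for all x, y ∈ G. -/
import Mathlib


/-- The 2-cochain `c((a,b),(a',b')) = (−1)^{a'·b}` on `G = ℤ/2 × ℤ` with values in `ℂˣ`. -/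
noncomputable def projCocycle : (ZMod 2 × ℤ) → (ZMod 2 × ℤ) → ℂˣ :=
  fun x y => (-1 : ℂˣ) ^ (((y.1.val : ℤ)) * x.2)

lemma neg_one_zpow_congr {a b : ℤ} (h : (a : ZMod 2) = (b : ZMod 2)) :
    (-1 : ℂˣ) ^ a = (-1 : ℂˣ) ^ b := by
  have h2 : (2 : ℤ) ∣ a - b := by
    have : ((a - b : ℤ) : ZMod 2) = 0 := by push_cast; rw [h]; ring
    exact (ZMod.intCast_zmod_eq_zero_iff_dvd _ 2).mp this
  obtain ⟨k, hk⟩ := h2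
  have ha : a = b + 2 * k := by omega
  have h21 : ((-1 : ℂˣ)) ^ (2 : ℤ) = 1 := by rw [zpow_two]; simp
  rw [ha, zpow_add, zpow_mul, h21, one_zpow, mul_one]

/-- The function `c((a,b),(a',b')) = (−1)^{a'·b}` is a 2-cocycle on
`ℤ/2 × ℤ` (for the trivial action on `ℂˣ`), and it is not a 2-coboundary. -/
theorem projCocycle_is_cocycle_not_coboundary :
    (∀ x y z : ZMod 2 × ℤ,
      projCocycle y z * projCocycle x (y + z) =
        projCocycle (x + y) z * projCocycle x y) ∧
    ¬ ∃ lam : ZMod 2 × ℤ → ℂˣ, ∀ x y : ZMod 2 × ℤ,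
        projCocycle x y = lam x * lam y * (lam (x + y))⁻¹ := by
  constructor
  · intro x y z
    simp only [projCocycle, Prod.fst_add, Prod.snd_add, ← zpow_add]
    apply neg_one_zpow_congr
    push_cast [ZMod.natCast_val, ZMod.cast_id]
    ring
  · rintro ⟨lam, hlam⟩
    have h1 := hlam ((1 : ZMod 2), (0 : ℤ)) ((0 : ZMod 2), (1 : ℤ))
    have h2 := hlam ((0 : ZMod 2), (1 : ℤ)) ((1 : ZMod 2), (0 : ℤ))
    rw [show ((1 : ZMod 2), (0 : ℤ)) + ((0 : ZMod 2), (1 : ℤ)) =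
        ((0 : ZMod 2), (1 : ℤ)) + ((1 : ZMod 2), (0 : ℤ)) by ring] at h1
    have : projCocycle ((1 : ZMod 2), (0 : ℤ)) ((0 : ZMod 2), (1 : ℤ)) =
        projCocycle ((0 : ZMod 2), (1 : ℤ)) ((1 : ZMod 2), (0 : ℤ)) := by
      rw [h1, h2, mul_comm (lam ((1 : ZMod 2), (0 : ℤ)))]
    simp only [projCocycle] at this
    norm_num [ZMod.val_one] at this
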